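/- If R is an invertible matrix, then as λ → ∞, the scaled regularized least-squares solution √(1+λ²) (SᵀS + λ RᵀR)⁻¹ Sᵀ v converges to (RᵀR)⁻¹ Sᵀ v. -/

import Mathlib

open Matrix Filter

/-- If `R` is invertible, then as `λ → ∞`, the scaled regularized
least-squares solution `√(1+λ²) (SᵀS + λ RᵀR)⁻¹ Sᵀ v` converges to `(RᵀR)⁻¹ Sᵀ v`. -/
theorem fer_limit (m n : ℕ) (S : Matrix (Fin m) (Fin n) ℝ)
    (R : Matrix (Fin n) (Fin n) ℝ) (hR : IsUnit R.det) (v : Fin m → ℝ) :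
    Tendsto
      (fun lam : ℝ =>
        Real.sqrt (1 + lam ^ 2) •
          ((Sᵀ * S + lam • (Rᵀ * R))⁻¹.mulVec (Sᵀ.mulVec v)))
      atTop
      (nhds ((Rᵀ * R)⁻¹.mulVec (Sᵀ.mulVec v))) := by
  have hdet : IsUnit (Rᵀ * R).det := by
    rw [Matrix.det_mul, Matrix.det_transpose]
    exact hR.mul hR
  set g : ℝ → Matrix (Fin n) (Fin n) ℝ := fun μ => μ • (Sᵀ * S) + Rᵀ * R with hg
  have hgcont : Continuous g := by
    apply Continuous.add
    · exact continuous_id.smul continuous_const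
    · exact continuous_const
  have hg0 : g 0 = Rᵀ * R := by simp [hg]
  -- continuity of μ ↦ (g μ)⁻¹.mulVec (Sᵀ.mulVec v) at 0
  have hinv : ContinuousAt Inv.inv (g 0) := by
    apply continuousAt_matrix_inv
    rw [Ring.inverse_eq_inv']
    apply continuousAt_inv₀
    rw [hg0]
    exact hdet.ne_zero
  have hF : ContinuousAt (fun μ => (g μ)⁻¹.mulVec (Sᵀ.mulVec v)) 0 := by
    have hmv : Continuous fun M : Matrix (Fin n) (Fin n) ℝ => M.mulVec (Sᵀ.mulVec v) :=
      continuous_id.matrix_mulVec continuous_const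
    exact hmv.continuousAt.comp (hinv.comp hgcont.continuousAt)
  -- vector part tends to the target
  have hvec : Tendsto (fun lam : ℝ => (g lam⁻¹)⁻¹.mulVec (Sᵀ.mulVec v)) atTop
      (nhds ((Rᵀ * R)⁻¹.mulVec (Sᵀ.mulVec v))) := by
    have := hF.tendsto.comp tendsto_inv_atTop_zero
    rwa [hg0] at this
  -- scalar part tends to 1
  have hscal : Tendsto (fun lam : ℝ => Real.sqrt (1 + lam ^ 2) * lam⁻¹) atTop (nhds 1) := by
    have h1 : Tendsto (fun lam : ℝ => Real.sqrt ((lam⁻¹) ^ 2 + 1)) atTop (nhds 1) := by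
      have h2 : Tendsto (fun lam : ℝ => (lam⁻¹) ^ 2 + 1) atTop (nhds 1) := by
        have := (tendsto_inv_atTop_zero.pow 2).add (tendsto_const_nhds (x := (1 : ℝ)))
        simpa using this
      have := (Real.continuous_sqrt.continuousAt (x := (1 : ℝ))).tendsto.comp h2
      simpa [Function.comp_def] using this
    apply h1.congr'
    filter_upwards [eventually_gt_atTop (0 : ℝ)] with lam hlam
    rw [show (lam⁻¹) ^ 2 + 1 = (1 + lam ^ 2) * (lam⁻¹) ^ 2 by
      field_simp]
    rw [Real.sqrt_mul (by positivity), Real.sqrt_sq (by positivity)]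
  -- eventual equality
  have heq : ∀ᶠ lam : ℝ in atTop,
      Real.sqrt (1 + lam ^ 2) • ((Sᵀ * S + lam • (Rᵀ * R))⁻¹.mulVec (Sᵀ.mulVec v)) =
        (Real.sqrt (1 + lam ^ 2) * lam⁻¹) • (g lam⁻¹)⁻¹.mulVec (Sᵀ.mulVec v) := by
    have hdet_ev : ∀ᶠ lam : ℝ in atTop, IsUnit (g lam⁻¹).det := by
      have hcd : ContinuousAt (fun μ => (g μ).det) 0 :=
        (hgcont.matrix_det).continuousAt
      have : ∀ᶠ μ : ℝ in nhds 0, (g μ).det ≠ 0 := by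
        apply hcd.eventually_ne
        rw [hg0]
        exact hdet.ne_zero
      have := tendsto_inv_atTop_zero.eventually this
      filter_upwards [this] with lam h using isUnit_iff_ne_zero.mpr h
    filter_upwards [hdet_ev, eventually_gt_atTop (0 : ℝ)] with lam hu hlam
    have hlu : lam ≠ 0 := ne_of_gt hlam
    have hrw : Sᵀ * S + lam • (Rᵀ * R) = (Units.mk0 lam hlu : ℝˣ) • g lam⁻¹ := by
      simp [hg, smul_add, smul_smul, mul_inv_cancel₀ hlu, add_comm]
    rw [hrw, Matrix.inv_smul' (g lam⁻¹) (Units.mk0 lam hlu) hu]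
    simp [Units.smul_def, Matrix.smul_mulVec, smul_smul]
  rw [show (Rᵀ * R)⁻¹.mulVec (Sᵀ.mulVec v) =
      (1 : ℝ) • (Rᵀ * R)⁻¹.mulVec (Sᵀ.mulVec v) by rw [one_smul]]
  exact Tendsto.congr' (heq.mono fun _ h => h.symm) (hscal.smul hvec)
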